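/- Let D = Dⁿ ∪ Dˣ be a database instance, Q a monotone Boolean query with ¬Q(∅), D ⊨ Q, and t ∈ Dⁿ. (a) ρ(t) = 0 if and only if MCD(M, t) = ∅. (b) Otherwise, ρ(t) = 1/|s| for any s ∈ MCD(M, t). (Proposition on responsibility and diagnoses.) -/
import Mathlib


open Classical

/-- `t` is an actual cause for query `Q` in instance `D` with endogenous part `Dn`. -/
def IsCause {U : Type*} [DecidableEq U] (D Dn : Finset U) (Q : Finset U → Prop) (t : U) : Prop :=
  t ∈ Dn ∧ ∃ Γ ⊆ Dn, t ∉ Γ ∧ Q (D \ Γ) ∧ ¬ Q (D \ insert t Γ)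

/-- The responsibility `ρ(t)`: `1/(1+m)` for `m` the minimum cardinality of a
contingency set for `t`, and `0` if `t` is not an actual cause. -/
noncomputable def resp {U : Type*} [DecidableEq U] (D Dn : Finset U) (Q : Finset U → Prop)
    (t : U) : ℚ :=
  if IsCause D Dn Q t then
    1 / ((sInf { n : ℕ | ∃ Γ ⊆ Dn, t ∉ Γ ∧ Q (D \ Γ) ∧ ¬ Q (D \ insert t Γ) ∧ Γ.card = n }
      : ℕ) + 1)
  else 0

/-- A diagnosis for the diagnosis problem `M` associated with `Q` on `D`. -/
def IsDiagnosis {U : Type*} [DecidableEq U] (D Dn : Finset U) (Q : Finset U → Prop)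
    (Δ : Finset U) : Prop :=
  Δ ⊆ Dn ∧ ¬ Q (D \ Δ)

/-- A subset-minimal diagnosis. -/
def IsMinDiagnosis {U : Type*} [DecidableEq U] (D Dn : Finset U) (Q : Finset U → Prop)
    (Δ : Finset U) : Prop :=
  IsDiagnosis D Dn Q Δ ∧ ∀ Δ' ⊂ Δ, ¬ IsDiagnosis D Dn Q Δ'

/-- `MCD(M, t)`: the subset-minimal diagnoses containing `t` that have minimum
cardinality among subset-minimal diagnoses containing `t`. -/
def MCD {U : Type*} [DecidableEq U] (D Dn : Finset U) (Q : Finset U → Prop) (t : U) :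
    Set (Finset U) :=
  { Δ | IsMinDiagnosis D Dn Q Δ ∧ t ∈ Δ ∧
      ∀ Δ', IsMinDiagnosis D Dn Q Δ' → t ∈ Δ' → Δ.card ≤ Δ'.card }

/-- Every diagnosis contains a subset-minimal diagnosis. -/
lemma exists_minDiag_subset {U : Type*} [DecidableEq U] (D Dn : Finset U)
    (Q : Finset U → Prop) :
    ∀ Δ : Finset U, IsDiagnosis D Dn Q Δ → ∃ Δ', Δ' ⊆ Δ ∧ IsMinDiagnosis D Dn Q Δ' := by
  intro Δ
  induction Δ using Finset.strongInduction with
  | _ Δ ih =>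
    intro hΔ
    by_cases h : ∀ Δ' ⊂ Δ, ¬ IsDiagnosis D Dn Q Δ'
    · exact ⟨Δ, subset_rfl, hΔ, h⟩
    · push_neg at h
      obtain ⟨Δ', hsub, hd⟩ := h
      obtain ⟨Δ'', h1, h2⟩ := ih Δ' hsub hd
      exact ⟨Δ'', h1.trans hsub.subset, h2⟩

/-- Responsibility and diagnoses: (a) `ρ(t) = 0` iff `MCD(M, t) = ∅`;
(b) otherwise `ρ(t) = 1/|s|` for any `s ∈ MCD(M, t)`. -/
theorem responsibility_from_diagnoses
    {U : Type*} [DecidableEq U] (D Dn Dx : Finset U) (Q : Finset U → Prop)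
    (hD : D = Dn ∪ Dx) (hdisj : Disjoint Dn Dx)
    (hmono : ∀ S S' : Finset U, S ⊆ S' → Q S → Q S')
    (hempty : ¬ Q ∅) (hQD : Q D)
    (t : U) (ht : t ∈ Dn) :
    (resp D Dn Q t = 0 ↔ MCD D Dn Q t = ∅) ∧
    (∀ s ∈ MCD D Dn Q t, resp D Dn Q t = 1 / (s.card : ℚ)) := by
  set S : Set ℕ :=
    { n : ℕ | ∃ Γ ⊆ Dn, t ∉ Γ ∧ Q (D \ Γ) ∧ ¬ Q (D \ insert t Γ) ∧ Γ.card = n } with hSdef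
  -- from a minimal diagnosis containing t, extract a contingency set
  have h1 : ∀ Δ, IsMinDiagnosis D Dn Q Δ → t ∈ Δ →
      ∃ Γ ⊆ Dn, t ∉ Γ ∧ Q (D \ Γ) ∧ ¬ Q (D \ insert t Γ) ∧ Γ.card + 1 = Δ.card := by
    intro Δ hΔ htΔ
    refine ⟨Δ.erase t, (Finset.erase_subset t Δ).trans hΔ.1.1, Finset.notMem_erase t Δ, ?_, ?_, ?_⟩
    · by_contra hq
      exact hΔ.2 (Δ.erase t) (Finset.erase_ssubset htΔ)
        ⟨(Finset.erase_subset t Δ).trans hΔ.1.1, hq⟩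
    · rw [Finset.insert_erase htΔ]; exact hΔ.1.2
    · exact Finset.card_erase_add_one htΔ
  -- from a contingency set, extract a minimal diagnosis containing t
  have h2 : ∀ Γ, Γ ⊆ Dn → t ∉ Γ → Q (D \ Γ) → ¬ Q (D \ insert t Γ) →
      ∃ Δ, IsMinDiagnosis D Dn Q Δ ∧ t ∈ Δ ∧ Δ.card ≤ Γ.card + 1 := by
    intro Γ hΓ htΓ hq hnq
    have hdiag : IsDiagnosis D Dn Q (insert t Γ) :=
      ⟨Finset.insert_subset ht hΓ, hnq⟩
    obtain ⟨Δ, hsub, hmin⟩ := exists_minDiag_subset D Dn Q (insert t Γ) hdiag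
    have htΔ : t ∈ Δ := by
      by_contra htΔ
      have hΔΓ : Δ ⊆ Γ := by
        intro x hx
        rcases Finset.mem_insert.mp (hsub hx) with h | h
        · exact absurd (h ▸ hx) htΔ
        · exact h
      exact hmin.1.2 (hmono _ _ (Finset.sdiff_subset_sdiff subset_rfl hΔΓ) hq)
    exact ⟨Δ, hmin, htΔ, le_trans (Finset.card_le_card hsub)
      (Finset.card_insert_le t Γ)⟩
  by_cases hc : IsCause D Dn Q t
  · -- t is a cause
    obtain ⟨-, Γ', hΓ', htΓ', hq', hnq'⟩ := hc
    have hSne : S.Nonempty := ⟨Γ'.card, Γ', hΓ', htΓ', hq', hnq', rfl⟩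
    have hm : sInf S ∈ S := Nat.sInf_mem hSne
    obtain ⟨Γ₀, hΓ₀, htΓ₀, hq₀, hnq₀, hcard₀⟩ := hm
    obtain ⟨Δ₀, hΔ₀min, htΔ₀, hcardΔ₀⟩ := h2 Γ₀ hΓ₀ htΓ₀ hq₀ hnq₀
    -- lower bound: every minimal diagnosis containing t has card ≥ sInf S + 1
    have hlow : ∀ Δ, IsMinDiagnosis D Dn Q Δ → t ∈ Δ → sInf S + 1 ≤ Δ.card := by
      intro Δ hΔ htΔ
      obtain ⟨Γ, hΓ, htΓ, hq, hnq, hcard⟩ := h1 Δ hΔ htΔ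
      have : sInf S ≤ Γ.card := Nat.sInf_le ⟨Γ, hΓ, htΓ, hq, hnq, rfl⟩
      omega
    have hΔ₀card : Δ₀.card = sInf S + 1 := by
      have := hlow Δ₀ hΔ₀min htΔ₀
      omega
    have hΔ₀MCD : Δ₀ ∈ MCD D Dn Q t := by
      refine ⟨hΔ₀min, htΔ₀, fun Δ' hΔ' htΔ' => ?_⟩
      have := hlow Δ' hΔ' htΔ'
      omega
    have hresp : resp D Dn Q t = 1 / ((((sInf S : ℕ)) : ℚ) + 1) := by
      rw [resp, if_pos ⟨ht, Γ', hΓ', htΓ', hq', hnq'⟩]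
    constructor
    · constructor
      · intro h0
        exfalso
        rw [hresp] at h0
        have hpos : (0:ℚ) < ((sInf S : ℕ) : ℚ) + 1 := by positivity
        rw [div_eq_zero_iff] at h0
        rcases h0 with h0 | h0
        · norm_num at h0
        · exact absurd h0 hpos.ne'
      · intro hMCD
        exact absurd hΔ₀MCD (hMCD ▸ Set.notMem_empty Δ₀)
    · intro s hs
      have hscard : s.card = sInf S + 1 := by
        have h₁ := hlow s hs.1 hs.2.1
        have h₂ := hs.2.2 Δ₀ hΔ₀min htΔ₀
        omega
      rw [hresp, hscard]
      push_cast
      ring_nf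
  · -- t is not a cause
    have hMCD : MCD D Dn Q t = ∅ := by
      ext s
      simp only [Set.mem_empty_iff_false, iff_false]
      intro hs
      obtain ⟨Γ, hΓ, htΓ, hq, hnq, -⟩ := h1 s hs.1 hs.2.1
      exact hc ⟨ht, Γ, hΓ, htΓ, hq, hnq⟩
    have hresp : resp D Dn Q t = 0 := by rw [resp, if_neg hc]
    refine ⟨⟨fun _ => hMCD, fun _ => hresp⟩, fun s hs => ?_⟩
    exact absurd (hMCD ▸ hs) (Set.notMem_empty s)
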